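/- arXiv:0912.1788 — 5 statements merged into one kernel-verified Lean document; each statement's English description precedes it below -/
import Mathlib

section
/- The functions H_1(z,p) = ½⟨z,Bz⟩ and H_2(z,p) = ½⟨z,z⟩ − ⟨Bz,p⟩ and J_1 = ⟨p,p⟩ and J_2 = 2⟨z,p⟩ − ⟨Bp,p⟩ are all first integrals of the system ż = z × Bz − Bp × Bz, ṗ = p × Bz on ℝ⁶, where B = diag(b_1,b_2,b_3). -/
open Matrix

private lemma const_of_hasDerivAt_zero {g : ℝ → ℝ} (h : ∀ t, HasDerivAt g 0 t) (t : ℝ) :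
    g t = g 0 :=
  is_const_of_deriv_eq_zero (fun x => (h x).differentiableAt) (fun x => (h x).deriv) t 0

/-- The functions `H₁ = ½⟨z,Bz⟩`, `H₂ = ½⟨z,z⟩ - ⟨Bz,p⟩`, `J₁ = ⟨p,p⟩` and
`J₂ = 2⟨z,p⟩ - ⟨Bp,p⟩` are first integrals of the Steklov system
`ż = z × Bz - Bp × Bz`, `ṗ = p × Bz` on `ℝ⁶`, where `B = diag (b₁,b₂,b₃)`. -/
theorem steklov_first_integrals (b : Fin 3 → ℝ) (z p : ℝ → Fin 3 → ℝ)
    (hz : ∀ t, HasDerivAt z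
      (crossProduct (z t) (fun i => b i * z t i)
        - crossProduct (fun i => b i * p t i) (fun i => b i * z t i)) t)
    (hp : ∀ t, HasDerivAt p (crossProduct (p t) (fun i => b i * z t i)) t)
    (t : ℝ) :
    ((1 / 2) * ∑ i, z t i * (b i * z t i) = (1 / 2) * ∑ i, z 0 i * (b i * z 0 i))
    ∧ ((1 / 2) * (∑ i, z t i * z t i) - ∑ i, (b i * z t i) * p t i
        = (1 / 2) * (∑ i, z 0 i * z 0 i) - ∑ i, (b i * z 0 i) * p 0 i)
    ∧ (∑ i, p t i * p t i = ∑ i, p 0 i * p 0 i)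
    ∧ (2 * (∑ i, z t i * p t i) - ∑ i, (b i * p t i) * p t i
        = 2 * (∑ i, z 0 i * p 0 i) - ∑ i, (b i * p 0 i) * p 0 i) := by
  set vz : ℝ → Fin 3 → ℝ := fun t => crossProduct (z t) (fun i => b i * z t i)
        - crossProduct (fun i => b i * p t i) (fun i => b i * z t i) with hvz
  set vp : ℝ → Fin 3 → ℝ := fun t => crossProduct (p t) (fun i => b i * z t i) with hvp
  have hzi : ∀ s i, HasDerivAt (fun u => z u i) (vz s i) s := fun s i =>
    hasDerivAt_pi.mp (hz s) i
  have hpi : ∀ s i, HasDerivAt (fun u => p u i) (vp s i) s := fun s i =>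
    hasDerivAt_pi.mp (hp s) i
  refine ⟨?_, ?_, ?_, ?_⟩
  · apply const_of_hasDerivAt_zero (g := fun u => (1/2) * ∑ i, z u i * (b i * z u i))
    intro s
    have key : HasDerivAt (fun u => (1/2 : ℝ) * ∑ i, z u i * (b i * z u i))
        ((1/2 : ℝ) * ∑ i, (vz s i * (b i * z s i) + z s i * (b i * vz s i))) s := by
      refine HasDerivAt.const_mul _ (HasDerivAt.fun_sum fun i _ => ?_)
      exact (hzi s i).mul ((hzi s i).const_mul (b i))
    have h0 : (1/2 : ℝ) * ∑ i, (vz s i * (b i * z s i) + z s i * (b i * vz s i)) = 0 := by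
      simp only [hvz, Pi.sub_apply, cross_apply, Fin.sum_univ_three]
      simp [Matrix.cons_val_zero, Matrix.cons_val_one]
      ring
    exact h0 ▸ key
  · apply const_of_hasDerivAt_zero
      (g := fun u => (1/2) * (∑ i, z u i * z u i) - ∑ i, (b i * z u i) * p u i)
    intro s
    have key : HasDerivAt
        (fun u => (1/2 : ℝ) * (∑ i, z u i * z u i) - ∑ i, (b i * z u i) * p u i)
        ((1/2 : ℝ) * (∑ i, (vz s i * z s i + z s i * vz s i))
          - ∑ i, ((b i * vz s i) * p s i + (b i * z s i) * vp s i)) s := by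
      refine HasDerivAt.sub
        (HasDerivAt.const_mul _ (HasDerivAt.fun_sum fun i _ => (hzi s i).mul (hzi s i)))
        (HasDerivAt.fun_sum fun i _ => ((hzi s i).const_mul (b i)).mul (hpi s i))
    have h0 : (1/2 : ℝ) * (∑ i, (vz s i * z s i + z s i * vz s i))
          - ∑ i, ((b i * vz s i) * p s i + (b i * z s i) * vp s i) = 0 := by
      simp only [hvz, hvp, Pi.sub_apply, cross_apply, Fin.sum_univ_three]
      simp [Matrix.cons_val_zero, Matrix.cons_val_one]
      ring
    exact h0 ▸ key
  · apply const_of_hasDerivAt_zero (g := fun u => ∑ i, p u i * p u i)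
    intro s
    have key : HasDerivAt (fun u => ∑ i, p u i * p u i)
        (∑ i, (vp s i * p s i + p s i * vp s i)) s :=
      HasDerivAt.fun_sum fun i _ => (hpi s i).mul (hpi s i)
    have h0 : (∑ i, (vp s i * p s i + p s i * vp s i)) = 0 := by
      simp only [hvp, cross_apply, Fin.sum_univ_three]
      simp [Matrix.cons_val_zero, Matrix.cons_val_one]
      ring
    exact h0 ▸ key
  · apply const_of_hasDerivAt_zero
      (g := fun u => 2 * (∑ i, z u i * p u i) - ∑ i, (b i * p u i) * p u i)
    intro s
    have key : HasDerivAt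
        (fun u => 2 * (∑ i, z u i * p u i) - ∑ i, (b i * p u i) * p u i)
        (2 * (∑ i, (vz s i * p s i + z s i * vp s i))
          - ∑ i, ((b i * vp s i) * p s i + (b i * p s i) * vp s i)) s := by
      refine HasDerivAt.sub
        (HasDerivAt.const_mul _ (HasDerivAt.fun_sum fun i _ => (hzi s i).mul (hpi s i)))
        (HasDerivAt.fun_sum fun i _ => ((hpi s i).const_mul (b i)).mul (hpi s i))
    have h0 : 2 * (∑ i, (vz s i * p s i + z s i * vp s i))
          - ∑ i, ((b i * vp s i) * p s i + (b i * p s i) * vp s i) = 0 := by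
      simp only [hvz, hvp, Pi.sub_apply, cross_apply, Fin.sum_univ_three]
      simp [Matrix.cons_val_zero, Matrix.cons_val_one]
      ring
    exact h0 ▸ key
end

section
/- With x_i as above and c ∈ ℂ, the vector V with components V_i = x_i·(√(Φ(λ_1)(λ_2−c))/(λ_1−b_i) + √(Φ(λ_2)(λ_1−c))/(λ_2−b_i)), where Φ(λ) = (λ−b_1)(λ−b_2)(λ−b_3), satisfies Σ_i (c−b_i)V_i² = 0 and Σ_i V_i x_i = 0 (under the symbolic rule √(ab)√(ac) = a√(bc)). -/
set_option maxHeartbeats 1000000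

private lemma term_helper (cb V r s q A B C : ℂ) (hq : q ≠ 0) (hr : r ≠ 0) (hs : s ≠ 0)
    (hV : cb * V ^ 2 = cb * ((r * s / q) *
      (A * r / (r * r) + B * s / (s * s) + C / (r * s)))) :
    cb * V ^ 2 = cb * (A * s + B * r + C) / q := by
  rw [hV]
  rw [show A * r / (r * r) = A / r from by
    rw [div_eq_div_iff (mul_ne_zero hr hr) hr]; ring]
  rw [show B * s / (s * s) = B / s from by
    rw [div_eq_div_iff (mul_ne_zero hs hs) hs]; ring]
  field_simp

private lemma sq_expand (u₁ u₂ t₁ t₂ r s : ℂ) (hr : r ≠ 0) (hs : s ≠ 0) :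
    (u₁ * t₂ / r + u₂ * t₁ / s) ^ 2 =
      (u₁ ^ 2) * (t₂ ^ 2) / (r * r) + (u₂ ^ 2) * (t₁ ^ 2) / (s * s)
        + (2 * (u₁ * u₂ * t₁ * t₂)) / (r * s) := by
  field_simp; ring

/-- The vector `Vᵢ = xᵢ (√(Φ(l₁)(l₂-c))/(l₁-bᵢ) + √(Φ(l₂)(l₁-c))/(l₂-bᵢ))`
satisfies `∑ᵢ (c-bᵢ)Vᵢ² = 0` (tangency to `Q(c)`) and `∑ᵢ Vᵢxᵢ = 0`
(passing through the focus).  The square roots are encoded by auxiliary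
variables `u₁² = Φ(l₁)`, `u₂² = Φ(l₂)`, `t₁² = l₁-c`, `t₂² = l₂-c`, so that
`√(Φ(l₁)(l₂-c)) = u₁t₂` and `√(Φ(l₂)(l₁-c)) = u₂t₁`, realizing the convention
`√(ab)·√(ac) = a·√(bc)`. -/
theorem tangency_vector_identities (b₁ b₂ b₃ : ℂ)
    (hb12 : b₁ ≠ b₂) (hb23 : b₂ ≠ b₃) (hb31 : b₃ ≠ b₁)
    (l₁ l₂ : ℂ) (hl : l₁ ≠ l₂)
    (h₁₁ : l₁ ≠ b₁) (h₁₂ : l₁ ≠ b₂) (h₁₃ : l₁ ≠ b₃)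
    (h₂₁ : l₂ ≠ b₁) (h₂₂ : l₂ ≠ b₂) (h₂₃ : l₂ ≠ b₃)
    (c : ℂ) (u₁ u₂ t₁ t₂ : ℂ)
    (hu₁ : u₁ ^ 2 = (l₁ - b₁) * (l₁ - b₂) * (l₁ - b₃))
    (hu₂ : u₂ ^ 2 = (l₂ - b₁) * (l₂ - b₂) * (l₂ - b₃))
    (ht₁ : t₁ ^ 2 = l₁ - c) (ht₂ : t₂ ^ 2 = l₂ - c)
    (x₁ x₂ x₃ : ℂ)
    (hx₁ : x₁ ^ 2 = (l₁ - b₁) * (l₂ - b₁) / ((b₁ - b₂) * (b₁ - b₃)))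
    (hx₂ : x₂ ^ 2 = (l₁ - b₂) * (l₂ - b₂) / ((b₂ - b₃) * (b₂ - b₁)))
    (hx₃ : x₃ ^ 2 = (l₁ - b₃) * (l₂ - b₃) / ((b₃ - b₁) * (b₃ - b₂)))
    (V₁ V₂ V₃ : ℂ)
    (hV₁ : V₁ = x₁ * (u₁ * t₂ / (l₁ - b₁) + u₂ * t₁ / (l₂ - b₁)))
    (hV₂ : V₂ = x₂ * (u₁ * t₂ / (l₁ - b₂) + u₂ * t₁ / (l₂ - b₂)))
    (hV₃ : V₃ = x₃ * (u₁ * t₂ / (l₁ - b₃) + u₂ * t₁ / (l₂ - b₃))) :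
    (c - b₁) * V₁ ^ 2 + (c - b₂) * V₂ ^ 2 + (c - b₃) * V₃ ^ 2 = 0
    ∧ V₁ * x₁ + V₂ * x₂ + V₃ * x₃ = 0 := by
  have d12 : b₁ - b₂ ≠ 0 := sub_ne_zero.mpr hb12
  have d23 : b₂ - b₃ ≠ 0 := sub_ne_zero.mpr hb23
  have d31 : b₃ - b₁ ≠ 0 := sub_ne_zero.mpr hb31
  have d21 : b₂ - b₁ ≠ 0 := sub_ne_zero.mpr hb12.symm
  have d32 : b₃ - b₂ ≠ 0 := sub_ne_zero.mpr hb23.symm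
  have d13 : b₁ - b₃ ≠ 0 := sub_ne_zero.mpr hb31.symm
  have n11 : l₁ - b₁ ≠ 0 := sub_ne_zero.mpr h₁₁
  have n12 : l₁ - b₂ ≠ 0 := sub_ne_zero.mpr h₁₂
  have n13 : l₁ - b₃ ≠ 0 := sub_ne_zero.mpr h₁₃
  have n21 : l₂ - b₁ ≠ 0 := sub_ne_zero.mpr h₂₁
  have n22 : l₂ - b₂ ≠ 0 := sub_ne_zero.mpr h₂₂
  have n23 : l₂ - b₃ ≠ 0 := sub_ne_zero.mpr h₂₃
  constructor
  · -- Expand each square with exact denominator shapes, then substitute.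
    have s1 := sq_expand u₁ u₂ t₁ t₂ (l₁ - b₁) (l₂ - b₁) n11 n21
    have s2 := sq_expand u₁ u₂ t₁ t₂ (l₁ - b₂) (l₂ - b₂) n12 n22
    have s3 := sq_expand u₁ u₂ t₁ t₂ (l₁ - b₃) (l₂ - b₃) n13 n23
    rw [hu₁, hu₂, ht₁, ht₂] at s1 s2 s3
    rw [show (l₁ - b₁) * (l₁ - b₂) * (l₁ - b₃) * (l₂ - c)
          = ((l₁ - b₂) * (l₁ - b₃) * (l₂ - c)) * (l₁ - b₁) by ring,
        show (l₂ - b₁) * (l₂ - b₂) * (l₂ - b₃) * (l₁ - c)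
          = ((l₂ - b₂) * (l₂ - b₃) * (l₁ - c)) * (l₂ - b₁) by ring] at s1
    rw [show (l₁ - b₁) * (l₁ - b₂) * (l₁ - b₃) * (l₂ - c)
          = ((l₁ - b₁) * (l₁ - b₃) * (l₂ - c)) * (l₁ - b₂) by ring,
        show (l₂ - b₁) * (l₂ - b₂) * (l₂ - b₃) * (l₁ - c)
          = ((l₂ - b₁) * (l₂ - b₃) * (l₁ - c)) * (l₂ - b₂) by ring] at s2
    rw [show (l₁ - b₁) * (l₁ - b₂) * (l₁ - b₃) * (l₂ - c)
          = ((l₁ - b₁) * (l₁ - b₂) * (l₂ - c)) * (l₁ - b₃) by ring,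
        show (l₂ - b₁) * (l₂ - b₂) * (l₂ - b₃) * (l₁ - c)
          = ((l₂ - b₁) * (l₂ - b₂) * (l₁ - c)) * (l₂ - b₃) by ring] at s3
    have f1 : (c - b₁) * V₁ ^ 2 = (c - b₁) * (((l₁ - b₁) * (l₂ - b₁) / ((b₁ - b₂) * (b₁ - b₃))) *
        (((l₁ - b₂) * (l₁ - b₃) * (l₂ - c)) * (l₁ - b₁) / ((l₁ - b₁) * (l₁ - b₁))
          + ((l₂ - b₂) * (l₂ - b₃) * (l₁ - c)) * (l₂ - b₁) / ((l₂ - b₁) * (l₂ - b₁))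
          + (2 * (u₁ * u₂ * t₁ * t₂)) / ((l₁ - b₁) * (l₂ - b₁)))) := by
      rw [hV₁, mul_pow, hx₁, s1]
    have f2 : (c - b₂) * V₂ ^ 2 = (c - b₂) * (((l₁ - b₂) * (l₂ - b₂) / ((b₂ - b₃) * (b₂ - b₁))) *
        (((l₁ - b₁) * (l₁ - b₃) * (l₂ - c)) * (l₁ - b₂) / ((l₁ - b₂) * (l₁ - b₂))
          + ((l₂ - b₁) * (l₂ - b₃) * (l₁ - c)) * (l₂ - b₂) / ((l₂ - b₂) * (l₂ - b₂))
          + (2 * (u₁ * u₂ * t₁ * t₂)) / ((l₁ - b₂) * (l₂ - b₂)))) := by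
      rw [hV₂, mul_pow, hx₂, s2]
    have f3 : (c - b₃) * V₃ ^ 2 = (c - b₃) * (((l₁ - b₃) * (l₂ - b₃) / ((b₃ - b₁) * (b₃ - b₂))) *
        (((l₁ - b₁) * (l₁ - b₂) * (l₂ - c)) * (l₁ - b₃) / ((l₁ - b₃) * (l₁ - b₃))
          + ((l₂ - b₁) * (l₂ - b₂) * (l₁ - c)) * (l₂ - b₃) / ((l₂ - b₃) * (l₂ - b₃))
          + (2 * (u₁ * u₂ * t₁ * t₂)) / ((l₁ - b₃) * (l₂ - b₃)))) := by
      rw [hV₃, mul_pow, hx₃, s3]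
    have g1 := term_helper (c - b₁) V₁ (l₁ - b₁) (l₂ - b₁) ((b₁ - b₂) * (b₁ - b₃))
      ((l₁ - b₂) * (l₁ - b₃) * (l₂ - c)) ((l₂ - b₂) * (l₂ - b₃) * (l₁ - c))
      (2 * (u₁ * u₂ * t₁ * t₂)) (mul_ne_zero d12 d13) n11 n21 f1
    have g2 := term_helper (c - b₂) V₂ (l₁ - b₂) (l₂ - b₂) ((b₂ - b₃) * (b₂ - b₁))
      ((l₁ - b₁) * (l₁ - b₃) * (l₂ - c)) ((l₂ - b₁) * (l₂ - b₃) * (l₁ - c))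
      (2 * (u₁ * u₂ * t₁ * t₂)) (mul_ne_zero d23 d21) n12 n22 f2
    have g3 := term_helper (c - b₃) V₃ (l₁ - b₃) (l₂ - b₃) ((b₃ - b₁) * (b₃ - b₂))
      ((l₁ - b₁) * (l₁ - b₂) * (l₂ - c)) ((l₂ - b₁) * (l₂ - b₂) * (l₁ - c))
      (2 * (u₁ * u₂ * t₁ * t₂)) (mul_ne_zero d31 d32) n13 n23 f3
    rw [g1, g2, g3]
    field_simp
    ring
  · have E : V₁ * x₁ + V₂ * x₂ + V₃ * x₃ =
      x₁ ^ 2 * (u₁ * t₂ / (l₁ - b₁) + u₂ * t₁ / (l₂ - b₁))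
      + x₂ ^ 2 * (u₁ * t₂ / (l₁ - b₂) + u₂ * t₁ / (l₂ - b₂))
      + x₃ ^ 2 * (u₁ * t₂ / (l₁ - b₃) + u₂ * t₁ / (l₂ - b₃)) := by
      rw [hV₁, hV₂, hV₃]; ring
    rw [E, hx₁, hx₂, hx₃]
    field_simp
    ring
end

section
/- Inner products of the tangency vectors: with V_α defined by V_{αi} = x_i(√(Φ(λ_1)(λ_2−c_α))/(λ_1−b_i) + √(Φ(λ_2)(λ_1−c_α))/(λ_2−b_i)), one has ⟨V_α, V_β⟩ = (λ_2−λ_1)(√((λ_2−c_α)(λ_2−c_β)) − √((λ_1−c_α)(λ_1−c_β))) for α ≠ β, and in particular ⟨V_α, V_α⟩ = (λ_1−λ_2)². -/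
set_option maxHeartbeats 1000000 in
/-- Inner products of the tangency vectors: with
`V_{αi} = xᵢ (√(Φ(l₁)(l₂-c_α))/(l₁-bᵢ) + √(Φ(l₂)(l₁-c_α))/(l₂-bᵢ))`, one has
`⟨V_α,V_β⟩ = (l₂-l₁)(√((l₂-c_α)(l₂-c_β)) - √((l₁-c_α)(l₁-c_β)))` for `α ≠ β`,
and `⟨V_α,V_α⟩ = (l₁-l₂)²`.  Square roots are encoded by `u_m² = Φ(λ_m)` and
`t_{mα}² = λ_m - c_α`, with `√(Φ(λ_m)(λ_{m'}-c_α)) = u_m t_{m'α}` and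
`√((λ_m-c_α)(λ_m-c_β)) = t_{mα} t_{mβ}` (the convention `√(ab)·√(ac) = a·√(bc)`). -/
theorem tangency_vectors_inner_products (b₁ b₂ b₃ : ℂ)
    (hb12 : b₁ ≠ b₂) (hb23 : b₂ ≠ b₃) (hb31 : b₃ ≠ b₁)
    (l₁ l₂ : ℂ) (hl : l₁ ≠ l₂)
    (h₁₁ : l₁ ≠ b₁) (h₁₂ : l₁ ≠ b₂) (h₁₃ : l₁ ≠ b₃)
    (h₂₁ : l₂ ≠ b₁) (h₂₂ : l₂ ≠ b₂) (h₂₃ : l₂ ≠ b₃)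
    (c : Fin 3 → ℂ) (u₁ u₂ : ℂ) (t : Fin 2 → Fin 3 → ℂ)
    (hu₁ : u₁ ^ 2 = (l₁ - b₁) * (l₁ - b₂) * (l₁ - b₃))
    (hu₂ : u₂ ^ 2 = (l₂ - b₁) * (l₂ - b₂) * (l₂ - b₃))
    (ht₁ : ∀ α, (t 0 α) ^ 2 = l₁ - c α)
    (ht₂ : ∀ α, (t 1 α) ^ 2 = l₂ - c α)
    (x₁ x₂ x₃ : ℂ)
    (hx₁ : x₁ ^ 2 = (l₁ - b₁) * (l₂ - b₁) / ((b₁ - b₂) * (b₁ - b₃)))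
    (hx₂ : x₂ ^ 2 = (l₁ - b₂) * (l₂ - b₂) / ((b₂ - b₃) * (b₂ - b₁)))
    (hx₃ : x₃ ^ 2 = (l₁ - b₃) * (l₂ - b₃) / ((b₃ - b₁) * (b₃ - b₂)))
    (V : Fin 3 → Fin 3 → ℂ)
    (hV : ∀ α, V α = fun i =>
      (![x₁, x₂, x₃] i) * (u₁ * t 1 α / (l₁ - ![b₁, b₂, b₃] i)
        + u₂ * t 0 α / (l₂ - ![b₁, b₂, b₃] i))) :
    (∀ α β, α ≠ β →
      ∑ i, V α i * V β i = (l₂ - l₁) * (t 1 α * t 1 β - t 0 α * t 0 β))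
    ∧ ∀ α, ∑ i, V α i * V α i = (l₁ - l₂) ^ 2 := by
  have hb12' : b₁ - b₂ ≠ 0 := sub_ne_zero.mpr hb12
  have hb23' : b₂ - b₃ ≠ 0 := sub_ne_zero.mpr hb23
  have hb31' : b₃ - b₁ ≠ 0 := sub_ne_zero.mpr hb31
  have hb13' : b₁ - b₃ ≠ 0 := sub_ne_zero.mpr (Ne.symm hb31)
  have hb21' : b₂ - b₁ ≠ 0 := sub_ne_zero.mpr (Ne.symm hb12)
  have hb32' : b₃ - b₂ ≠ 0 := sub_ne_zero.mpr (Ne.symm hb23)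
  have h₁₁' : l₁ - b₁ ≠ 0 := sub_ne_zero.mpr h₁₁
  have h₁₂' : l₁ - b₂ ≠ 0 := sub_ne_zero.mpr h₁₂
  have h₁₃' : l₁ - b₃ ≠ 0 := sub_ne_zero.mpr h₁₃
  have h₂₁' : l₂ - b₁ ≠ 0 := sub_ne_zero.mpr h₂₁
  have h₂₂' : l₂ - b₂ ≠ 0 := sub_ne_zero.mpr h₂₂
  have h₂₃' : l₂ - b₃ ≠ 0 := sub_ne_zero.mpr h₂₃
  have hΦ₁ : (l₁ - b₁) * (l₁ - b₂) * (l₁ - b₃) ≠ 0 :=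
    mul_ne_zero (mul_ne_zero h₁₁' h₁₂') h₁₃'
  have hΦ₂ : (l₂ - b₁) * (l₂ - b₂) * (l₂ - b₃) ≠ 0 :=
    mul_ne_zero (mul_ne_zero h₂₁' h₂₂') h₂₃'
  have d₁A : (b₁ - b₂) * (b₁ - b₃) * (l₁ - b₁) * (l₁ - b₁) ≠ 0 :=
    mul_ne_zero (mul_ne_zero (mul_ne_zero hb12' hb13') h₁₁') h₁₁'
  have d₂A : (b₂ - b₃) * (b₂ - b₁) * (l₁ - b₂) * (l₁ - b₂) ≠ 0 :=
    mul_ne_zero (mul_ne_zero (mul_ne_zero hb23' hb21') h₁₂') h₁₂'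
  have d₃A : (b₃ - b₁) * (b₃ - b₂) * (l₁ - b₃) * (l₁ - b₃) ≠ 0 :=
    mul_ne_zero (mul_ne_zero (mul_ne_zero hb31' hb32') h₁₃') h₁₃'
  have d₁B : (b₁ - b₂) * (b₁ - b₃) * (l₂ - b₁) * (l₂ - b₁) ≠ 0 :=
    mul_ne_zero (mul_ne_zero (mul_ne_zero hb12' hb13') h₂₁') h₂₁'
  have d₂B : (b₂ - b₃) * (b₂ - b₁) * (l₂ - b₂) * (l₂ - b₂) ≠ 0 :=
    mul_ne_zero (mul_ne_zero (mul_ne_zero hb23' hb21') h₂₂') h₂₂'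
  have d₃B : (b₃ - b₁) * (b₃ - b₂) * (l₂ - b₃) * (l₂ - b₃) ≠ 0 :=
    mul_ne_zero (mul_ne_zero (mul_ne_zero hb31' hb32') h₂₃') h₂₃'
  have d₁C : (b₁ - b₂) * (b₁ - b₃) * (l₁ - b₁) * (l₂ - b₁) ≠ 0 :=
    mul_ne_zero (mul_ne_zero (mul_ne_zero hb12' hb13') h₁₁') h₂₁'
  have d₂C : (b₂ - b₃) * (b₂ - b₁) * (l₁ - b₂) * (l₂ - b₂) ≠ 0 :=
    mul_ne_zero (mul_ne_zero (mul_ne_zero hb23' hb21') h₁₂') h₂₂'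
  have d₃C : (b₃ - b₁) * (b₃ - b₂) * (l₁ - b₃) * (l₂ - b₃) ≠ 0 :=
    mul_ne_zero (mul_ne_zero (mul_ne_zero hb31' hb32') h₁₃') h₂₃'
  have hA : x₁ ^ 2 / (l₁ - b₁) / (l₁ - b₁) + x₂ ^ 2 / (l₁ - b₂) / (l₁ - b₂)
      + x₃ ^ 2 / (l₁ - b₃) / (l₁ - b₃) = (l₂ - l₁) / (l₁ - b₁) / (l₁ - b₂) / (l₁ - b₃) := by
    rw [hx₁, hx₂, hx₃]
    simp only [div_div]
    rw [div_add_div _ _ d₁A d₂A, div_add_div _ _ (mul_ne_zero d₁A d₂A) d₃A,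
      div_eq_div_iff (mul_ne_zero (mul_ne_zero d₁A d₂A) d₃A) hΦ₁]
    ring
  have hB : x₁ ^ 2 / (l₂ - b₁) / (l₂ - b₁) + x₂ ^ 2 / (l₂ - b₂) / (l₂ - b₂)
      + x₃ ^ 2 / (l₂ - b₃) / (l₂ - b₃) = (l₁ - l₂) / (l₂ - b₁) / (l₂ - b₂) / (l₂ - b₃) := by
    rw [hx₁, hx₂, hx₃]
    simp only [div_div]
    rw [div_add_div _ _ d₁B d₂B, div_add_div _ _ (mul_ne_zero d₁B d₂B) d₃B,
      div_eq_div_iff (mul_ne_zero (mul_ne_zero d₁B d₂B) d₃B) hΦ₂]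
    ring
  have hC : x₁ ^ 2 / (l₁ - b₁) / (l₂ - b₁) + x₂ ^ 2 / (l₁ - b₂) / (l₂ - b₂)
      + x₃ ^ 2 / (l₁ - b₃) / (l₂ - b₃) = 0 := by
    rw [hx₁, hx₂, hx₃]
    simp only [div_div]
    rw [div_add_div _ _ d₁C d₂C, div_add_div _ _ (mul_ne_zero d₁C d₂C) d₃C,
      div_eq_zero_iff]
    left
    ring
  have e₁ : (l₁ - b₁) * (l₁ - b₂) * (l₁ - b₃)
      * ((l₂ - l₁) / (l₁ - b₁) / (l₁ - b₂) / (l₁ - b₃)) = l₂ - l₁ := by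
    simp only [div_div]
    rw [mul_div_assoc']
    exact mul_div_cancel_left₀ _ hΦ₁
  have e₂ : (l₂ - b₁) * (l₂ - b₂) * (l₂ - b₃)
      * ((l₁ - l₂) / (l₂ - b₁) / (l₂ - b₂) / (l₂ - b₃)) = l₁ - l₂ := by
    simp only [div_div]
    rw [mul_div_assoc']
    exact mul_div_cancel_left₀ _ hΦ₂
  have key : ∀ α β, ∑ i, V α i * V β i
      = (l₂ - l₁) * (t 1 α * t 1 β - t 0 α * t 0 β) := by
    intro α β
    have expand : ∑ i, V α i * V β i =
        u₁ ^ 2 * (t 1 α * t 1 β) *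
          (x₁ ^ 2 / (l₁ - b₁) / (l₁ - b₁) + x₂ ^ 2 / (l₁ - b₂) / (l₁ - b₂)
            + x₃ ^ 2 / (l₁ - b₃) / (l₁ - b₃))
      + u₂ ^ 2 * (t 0 α * t 0 β) *
          (x₁ ^ 2 / (l₂ - b₁) / (l₂ - b₁) + x₂ ^ 2 / (l₂ - b₂) / (l₂ - b₂)
            + x₃ ^ 2 / (l₂ - b₃) / (l₂ - b₃))
      + u₁ * u₂ * (t 1 α * t 0 β + t 0 α * t 1 β) *
          (x₁ ^ 2 / (l₁ - b₁) / (l₂ - b₁) + x₂ ^ 2 / (l₁ - b₂) / (l₂ - b₂)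
            + x₃ ^ 2 / (l₁ - b₃) / (l₂ - b₃)) := by
      simp only [hV, Fin.sum_univ_three, Matrix.cons_val_zero, Matrix.cons_val_one,
        Matrix.head_cons, Matrix.cons_val_two, Matrix.tail_cons]
      ring
    rw [expand, hA, hB, hC, hu₁, hu₂, mul_zero, add_zero]
    linear_combination (t 1 α * t 1 β) * e₁ + (t 0 α * t 0 β) * e₂
  refine ⟨fun α β _ => key α β, fun α => ?_⟩
  linear_combination key α α + (l₂ - l₁) * ht₂ α - (l₂ - l₁) * ht₁ α
end

section
/- Full-square identity: |c_1Σ_1V_1 + c_2Σ_2V_2 + c_3Σ_3V_3|² = x_1²(λ_1−λ_2)⁴ (Σ_{α} (c_β−c_γ)√(−(λ_1−c_α)(λ_2−c_α)))², where Σ_α = (λ_1−λ_2)x_1(√(−(λ_1−c_γ)(λ_2−c_β)) − √(−(λ_1−c_β)(λ_2−c_γ))) and the inner products ⟨V_α,V_β⟩ = (λ_2−λ_1)(√((λ_2−c_α)(λ_2−c_β)) − √((λ_1−c_α)(λ_1−c_β))), ⟨V_α,V_α⟩ = (λ_1−λ_2)². -/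
open Complex

/-- Full-square identity:
`|c₁Σ₁V₁ + c₂Σ₂V₂ + c₃Σ₃V₃|² = x₁²(l₁-l₂)⁴ (∑_α (c_β-c_γ)√(-(l₁-c_α)(l₂-c_α)))²`,
where `Σ_α = (l₁-l₂)x₁(√(-(l₁-c_γ)(l₂-c_β)) - √(-(l₁-c_β)(l₂-c_γ)))` and the
inner products of the `V_α` are the ones of the tangency vectors.  Square roots
are encoded in the ring extension with `s_{mα}² = -(λ_m - c_α)`, so that
`√(-(λ_m - c_α)(λ_{m'} - c_β)) = I s_{mα} s_{m'β}` (for `m ≠ m'`),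
`√(-(l₁-c_α)(l₂-c_α)) = I s_{1α} s_{2α}` and
`√((λ_m-c_α)(λ_m-c_β)) = -s_{mα} s_{mβ}`, per the symbolic convention
`√(ab)·√(ac) = a·√(bc)`. -/
theorem full_square_identity (c : Fin 3 → ℂ)
    (hc : ∀ α β : Fin 3, α ≠ β → c α ≠ c β)
    (l₁ l₂ : ℂ) (hl : l₁ ≠ l₂) (x₁ : ℂ)
    (s : Fin 2 → Fin 3 → ℂ)
    (hs₁ : ∀ α, (s 0 α) ^ 2 = -(l₁ - c α))
    (hs₂ : ∀ α, (s 1 α) ^ 2 = -(l₂ - c α))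
    (V : Fin 3 → Fin 3 → ℂ)
    (hVoff : ∀ α β, α ≠ β → ∑ i, V α i * V β i =
      (l₂ - l₁) * ((-(s 1 α * s 1 β)) - (-(s 0 α * s 0 β))))
    (hVdiag : ∀ α, ∑ i, V α i * V α i = (l₁ - l₂) ^ 2)
    (Sg : Fin 3 → ℂ)
    (hSg : ∀ α, Sg α = (l₁ - l₂) * x₁ *
      (I * s 0 (α + 2) * s 1 (α + 1) - I * s 0 (α + 1) * s 1 (α + 2)))
    (W : Fin 3 → ℂ)
    (hW : W = fun i => ∑ α, c α * Sg α * V α i) :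
    ∑ i, W i * W i =
      x₁ ^ 2 * (l₁ - l₂) ^ 4 *
        (∑ α, (c (α + 1) - c (α + 2)) * (I * s 0 α * s 1 α)) ^ 2 := by
  subst hW
  have d0 := hVdiag 0; have d1 := hVdiag 1; have d2 := hVdiag 2
  have o01 := hVoff 0 1 (by decide); have o02 := hVoff 0 2 (by decide)
  have o10 := hVoff 1 0 (by decide); have o12 := hVoff 1 2 (by decide)
  have o20 := hVoff 2 0 (by decide); have o21 := hVoff 2 1 (by decide)
  simp only [Fin.sum_univ_three] at d0 d1 d2 o01 o02 o10 o12 o20 o21 ⊢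
  rw [hSg 0, hSg 1, hSg 2]
  simp only [show ((0:Fin 3)+1 : Fin 3) = 1 from rfl, show ((0:Fin 3)+2 : Fin 3) = 2 from rfl,
    show ((1:Fin 3)+1 : Fin 3) = 2 from rfl, show ((1:Fin 3)+2 : Fin 3) = 0 from rfl,
    show ((2:Fin 3)+1 : Fin 3) = 0 from rfl, show ((2:Fin 3)+2 : Fin 3) = 1 from rfl]
  linear_combination ((-2)*s 0 1*s 0 2*s 1 1*s 1 2*l₁^3*x₁^2*c 0*c 1*I^2 + (6)*s 0 1*s 0 2*s 1 1*s 1 2*l₁^2*l₂*x₁^2*c 0*c 1*I^2 + (-6)*s 0 1*s 0 2*s 1 1*s 1 2*l₁*l₂^2*x₁^2*c 0*c 1*I^2 + (2)*s 0 1^2*s 1 2^2*l₁^3*x₁^2*c 0*c 1*I^2 + (-6)*s 0 1^2*s 1 2^2*l₁^2*l₂*x₁^2*c 0*c 1*I^2 + (6)*s 0 1^2*s 1 2^2*l₁*l₂^2*x₁^2*c 0*c 1*I^2 + (2)*s 0 1*s 0 2*s 1 1*s 1 2*l₂^3*x₁^2*c 0*c 1*I^2 + (-2)*s 0 1^2*s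 1 2^2*l₂^3*x₁^2*c 0*c 1*I^2 + (2)*s 0 2^2*s 1 1^2*l₁^3*x₁^2*c 0*c 2*I^2 + (-6)*s 0 2^2*s 1 1^2*l₁^2*l₂*x₁^2*c 0*c 2*I^2 + (6)*s 0 2^2*s 1 1^2*l₁*l₂^2*x₁^2*c 0*c 2*I^2 + (-2)*s 0 1*s 0 2*s 1 1*s 1 2*l₁^3*x₁^2*c 0*c 2*I^2 + (6)*s 0 1*s 0 2*s 1 1*s 1 2*l₁^2*l₂*x₁^2*c 0*c 2*I^2 + (-6)*s 0 1*s 0 2*s 1 1*s 1 2*l₁*l₂^2*x₁^2*c 0*c 2*I^2 + (-2)*s 0 2^2*s 1 1^2*l₂^3*x₁^2*c 0*c 2*I^2 + (2)*s 0 1*s 0 2*s 1 1*s 1 2*l₂^3*x₁^2*c 0*c 2*I^2 + s 1 2^2*l₁^4*x₁^2*c 1^2*I^2 + (-4)*s 1 2^2*l₁^3*l₂*x₁^2*c 1^2*I^2 + (6)*s 1 2^2*l₁^2*l₂^2*x₁^2*c 1^2*I^2 + (-4)*s 1 2^2*l₁*l₂^3*x₁^2*c 1^2*I^2 + s 1 2^2*l₂^4*x₁^2*c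 1^2*I^2 + (-2)*s 1 1^2*s 1 2^2*l₁^3*x₁^2*c 1*c 2*I^2 + (2)*s 0 1*s 0 2*s 1 1*s 1 2*l₁^3*x₁^2*c 1*c 2*I^2 + (6)*s 1 1^2*s 1 2^2*l₁^2*l₂*x₁^2*c 1*c 2*I^2 + (-6)*s 0 1*s 0 2*s 1 1*s 1 2*l₁^2*l₂*x₁^2*c 1*c 2*I^2 + (-6)*s 1 1^2*s 1 2^2*l₁*l₂^2*x₁^2*c 1*c 2*I^2 + (6)*s 0 1*s 0 2*s 1 1*s 1 2*l₁*l₂^2*x₁^2*c 1*c 2*I^2 + (2)*s 1 1^2*s 1 2^2*l₂^3*x₁^2*c 1*c 2*I^2 + (-2)*s 0 1*s 0 2*s 1 1*s 1 2*l₂^3*x₁^2*c 1*c 2*I^2 + s 1 1^2*l₁^4*x₁^2*c 2^2*I^2 + (-4)*s 1 1^2*l₁^3*l₂*x₁^2*c 2^2*I^2 + (6)*s 1 1^2*l₁^2*l₂^2*x₁^2*c 2^2*I^2 + (-4)*s 1 1^2*l₁*l₂^3*x₁^2*c 2^2*I^2 + s 1 1^2*l₂^4*x₁^2*c 2^2*I^2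 + (-1)*s 1 0^2*l₁^4*x₁^2*c 1^2*I^2 + (2)*s 1 0^2*l₁^4*x₁^2*c 1*c 2*I^2 + (-1)*s 1 0^2*l₁^4*x₁^2*c 2^2*I^2 + (4)*s 1 0^2*l₁^3*l₂*x₁^2*c 1^2*I^2 + (-8)*s 1 0^2*l₁^3*l₂*x₁^2*c 1*c 2*I^2 + (4)*s 1 0^2*l₁^3*l₂*x₁^2*c 2^2*I^2 + (-6)*s 1 0^2*l₁^2*l₂^2*x₁^2*c 1^2*I^2 + (12)*s 1 0^2*l₁^2*l₂^2*x₁^2*c 1*c 2*I^2 + (-6)*s 1 0^2*l₁^2*l₂^2*x₁^2*c 2^2*I^2 + (4)*s 1 0^2*l₁*l₂^3*x₁^2*c 1^2*I^2 + (-8)*s 1 0^2*l₁*l₂^3*x₁^2*c 1*c 2*I^2 + (4)*s 1 0^2*l₁*l₂^3*x₁^2*c 2^2*I^2 + (-1)*s 1 0^2*l₂^4*x₁^2*c 1^2*I^2 + (2)*s 1 0^2*l₂^4*x₁^2*c 1*c 2*I^2 + (-1)*s 1 0^2*l₂^4*x₁^2*c 2^2*I^2) * (hs₁ 0) +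
    (s 1 2^2*l₁^4*x₁^2*c 0^2*I^2 + (-4)*s 1 2^2*l₁^3*l₂*x₁^2*c 0^2*I^2 + (6)*s 1 2^2*l₁^2*l₂^2*x₁^2*c 0^2*I^2 + (-4)*s 1 2^2*l₁*l₂^3*x₁^2*c 0^2*I^2 + s 1 2^2*l₂^4*x₁^2*c 0^2*I^2 + (-2)*s 1 2^2*l₁^4*x₁^2*c 0*c 1*I^2 + (2)*s 1 2^2*l₁^3*x₁^2*c 0^2*c 1*I^2 + (6)*s 1 2^2*l₁^3*l₂*x₁^2*c 0*c 1*I^2 + (-6)*s 1 2^2*l₁^2*l₂*x₁^2*c 0^2*c 1*I^2 + (-2)*s 0 0*s 0 2*s 1 0*s 1 2*l₁^3*x₁^2*c 0*c 1*I^2 + (6)*s 0 0*s 0 2*s 1 0*s 1 2*l₁^2*l₂*x₁^2*c 0*c 1*I^2 + (-6)*s 1 2^2*l₁^2*l₂^2*x₁^2*c 0*c 1*I^2 + (6)*s 1 2^2*l₁*l₂^2*x₁^2*c 0^2*c 1*I^2 + (-6)*s 0 0*s 0 2*s 1 0*s 1 2*l₁*l₂^2*x₁^2*c 0*c 1*I^2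 + (2)*s 1 2^2*l₁*l₂^3*x₁^2*c 0*c 1*I^2 + (-2)*s 1 2^2*l₂^3*x₁^2*c 0^2*c 1*I^2 + (2)*s 0 0*s 0 2*s 1 0*s 1 2*l₂^3*x₁^2*c 0*c 1*I^2 + (-2)*s 1 0^2*s 1 2^2*l₁^3*x₁^2*c 0*c 2*I^2 + (2)*s 0 0*s 0 2*s 1 0*s 1 2*l₁^3*x₁^2*c 0*c 2*I^2 + (6)*s 1 0^2*s 1 2^2*l₁^2*l₂*x₁^2*c 0*c 2*I^2 + (-6)*s 0 0*s 0 2*s 1 0*s 1 2*l₁^2*l₂*x₁^2*c 0*c 2*I^2 + (-6)*s 1 0^2*s 1 2^2*l₁*l₂^2*x₁^2*c 0*c 2*I^2 + (6)*s 0 0*s 0 2*s 1 0*s 1 2*l₁*l₂^2*x₁^2*c 0*c 2*I^2 + (2)*s 1 0^2*s 1 2^2*l₂^3*x₁^2*c 0*c 2*I^2 + (-2)*s 0 0*s 0 2*s 1 0*s 1 2*l₂^3*x₁^2*c 0*c 2*I^2 + (-2)*s 0 0*s 0 2*s 1 0*s 1 2*l₁^3*x₁^2*c 1*c 2*I^2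 + (6)*s 0 0*s 0 2*s 1 0*s 1 2*l₁^2*l₂*x₁^2*c 1*c 2*I^2 + (-6)*s 0 0*s 0 2*s 1 0*s 1 2*l₁*l₂^2*x₁^2*c 1*c 2*I^2 + (2)*s 0 2^2*s 1 0^2*l₁^3*x₁^2*c 1*c 2*I^2 + (-6)*s 0 2^2*s 1 0^2*l₁^2*l₂*x₁^2*c 1*c 2*I^2 + (6)*s 0 2^2*s 1 0^2*l₁*l₂^2*x₁^2*c 1*c 2*I^2 + (2)*s 0 0*s 0 2*s 1 0*s 1 2*l₂^3*x₁^2*c 1*c 2*I^2 + (-2)*s 0 2^2*s 1 0^2*l₂^3*x₁^2*c 1*c 2*I^2 + s 1 0^2*l₁^4*x₁^2*c 2^2*I^2 + (-4)*s 1 0^2*l₁^3*l₂*x₁^2*c 2^2*I^2 + (6)*s 1 0^2*l₁^2*l₂^2*x₁^2*c 2^2*I^2 + (-4)*s 1 0^2*l₁*l₂^3*x₁^2*c 2^2*I^2 + s 1 0^2*l₂^4*x₁^2*c 2^2*I^2 + (-1)*s 1 1^2*l₁^4*x₁^2*c 2^2*I^2 + (2)*s 1 1^2*l₁^4*x₁^2*c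 0*c 2*I^2 + (-1)*s 1 1^2*l₁^4*x₁^2*c 0^2*I^2 + (4)*s 1 1^2*l₁^3*l₂*x₁^2*c 2^2*I^2 + (-8)*s 1 1^2*l₁^3*l₂*x₁^2*c 0*c 2*I^2 + (4)*s 1 1^2*l₁^3*l₂*x₁^2*c 0^2*I^2 + (-6)*s 1 1^2*l₁^2*l₂^2*x₁^2*c 2^2*I^2 + (12)*s 1 1^2*l₁^2*l₂^2*x₁^2*c 0*c 2*I^2 + (-6)*s 1 1^2*l₁^2*l₂^2*x₁^2*c 0^2*I^2 + (4)*s 1 1^2*l₁*l₂^3*x₁^2*c 2^2*I^2 + (-8)*s 1 1^2*l₁*l₂^3*x₁^2*c 0*c 2*I^2 + (4)*s 1 1^2*l₁*l₂^3*x₁^2*c 0^2*I^2 + (-1)*s 1 1^2*l₂^4*x₁^2*c 2^2*I^2 + (2)*s 1 1^2*l₂^4*x₁^2*c 0*c 2*I^2 + (-1)*s 1 1^2*l₂^4*x₁^2*c 0^2*I^2) * (hs₁ 1) +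
    (s 1 1^2*l₁^4*x₁^2*c 0^2*I^2 + (-4)*s 1 1^2*l₁^3*l₂*x₁^2*c 0^2*I^2 + (6)*s 1 1^2*l₁^2*l₂^2*x₁^2*c 0^2*I^2 + (-4)*s 1 1^2*l₁*l₂^3*x₁^2*c 0^2*I^2 + s 1 1^2*l₂^4*x₁^2*c 0^2*I^2 + (-2)*s 1 0^2*s 1 1^2*l₁^3*x₁^2*c 0*c 1*I^2 + (2)*s 0 0*s 0 1*s 1 0*s 1 1*l₁^3*x₁^2*c 0*c 1*I^2 + (6)*s 1 0^2*s 1 1^2*l₁^2*l₂*x₁^2*c 0*c 1*I^2 + (-6)*s 0 0*s 0 1*s 1 0*s 1 1*l₁^2*l₂*x₁^2*c 0*c 1*I^2 + (-6)*s 1 0^2*s 1 1^2*l₁*l₂^2*x₁^2*c 0*c 1*I^2 + (6)*s 0 0*s 0 1*s 1 0*s 1 1*l₁*l₂^2*x₁^2*c 0*c 1*I^2 + (2)*s 1 0^2*s 1 1^2*l₂^3*x₁^2*c 0*c 1*I^2 + (-2)*s 0 0*s 0 1*s 1 0*s 1 1*l₂^3*x₁^2*c 0*c 1*I^2 + (-2)*s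 0 0*s 0 1*s 1 0*s 1 1*l₁^3*x₁^2*c 0*c 2*I^2 + (6)*s 0 0*s 0 1*s 1 0*s 1 1*l₁^2*l₂*x₁^2*c 0*c 2*I^2 + (-2)*s 1 1^2*l₁^4*x₁^2*c 0*c 2*I^2 + (2)*s 1 1^2*l₁^3*x₁^2*c 0^2*c 2*I^2 + (6)*s 1 1^2*l₁^3*l₂*x₁^2*c 0*c 2*I^2 + (-6)*s 1 1^2*l₁^2*l₂*x₁^2*c 0^2*c 2*I^2 + (-6)*s 0 0*s 0 1*s 1 0*s 1 1*l₁*l₂^2*x₁^2*c 0*c 2*I^2 + (-6)*s 1 1^2*l₁^2*l₂^2*x₁^2*c 0*c 2*I^2 + (6)*s 1 1^2*l₁*l₂^2*x₁^2*c 0^2*c 2*I^2 + (2)*s 0 0*s 0 1*s 1 0*s 1 1*l₂^3*x₁^2*c 0*c 2*I^2 + (2)*s 1 1^2*l₁*l₂^3*x₁^2*c 0*c 2*I^2 + (-2)*s 1 1^2*l₂^3*x₁^2*c 0^2*c 2*I^2 + s 1 0^2*l₁^4*x₁^2*c 1^2*I^2 + (-4)*s 1 0^2*l₁^3*l₂*x₁^2*c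 1^2*I^2 + (6)*s 1 0^2*l₁^2*l₂^2*x₁^2*c 1^2*I^2 + (-4)*s 1 0^2*l₁*l₂^3*x₁^2*c 1^2*I^2 + s 1 0^2*l₂^4*x₁^2*c 1^2*I^2 + (-2)*s 1 0^2*l₁^4*x₁^2*c 1*c 2*I^2 + (2)*s 1 0^2*l₁^3*x₁^2*c 1^2*c 2*I^2 + (6)*s 1 0^2*l₁^3*l₂*x₁^2*c 1*c 2*I^2 + (-6)*s 1 0^2*l₁^2*l₂*x₁^2*c 1^2*c 2*I^2 + (-2)*s 0 0*s 0 1*s 1 0*s 1 1*l₁^3*x₁^2*c 1*c 2*I^2 + (6)*s 0 0*s 0 1*s 1 0*s 1 1*l₁^2*l₂*x₁^2*c 1*c 2*I^2 + (-6)*s 1 0^2*l₁^2*l₂^2*x₁^2*c 1*c 2*I^2 + (6)*s 1 0^2*l₁*l₂^2*x₁^2*c 1^2*c 2*I^2 + (-6)*s 0 0*s 0 1*s 1 0*s 1 1*l₁*l₂^2*x₁^2*c 1*c 2*I^2 + (2)*s 1 0^2*l₁*l₂^3*x₁^2*c 1*c 2*I^2 + (-2)*s 1 0^2*l₂^3*x₁^2*c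 1^2*c 2*I^2 + (2)*s 0 0*s 0 1*s 1 0*s 1 1*l₂^3*x₁^2*c 1*c 2*I^2 + (-1)*s 1 2^2*l₁^4*x₁^2*c 0^2*I^2 + (2)*s 1 2^2*l₁^4*x₁^2*c 0*c 1*I^2 + (-1)*s 1 2^2*l₁^4*x₁^2*c 1^2*I^2 + (4)*s 1 2^2*l₁^3*l₂*x₁^2*c 0^2*I^2 + (-8)*s 1 2^2*l₁^3*l₂*x₁^2*c 0*c 1*I^2 + (4)*s 1 2^2*l₁^3*l₂*x₁^2*c 1^2*I^2 + (-6)*s 1 2^2*l₁^2*l₂^2*x₁^2*c 0^2*I^2 + (12)*s 1 2^2*l₁^2*l₂^2*x₁^2*c 0*c 1*I^2 + (-6)*s 1 2^2*l₁^2*l₂^2*x₁^2*c 1^2*I^2 + (4)*s 1 2^2*l₁*l₂^3*x₁^2*c 0^2*I^2 + (-8)*s 1 2^2*l₁*l₂^3*x₁^2*c 0*c 1*I^2 + (4)*s 1 2^2*l₁*l₂^3*x₁^2*c 1^2*I^2 + (-1)*s 1 2^2*l₂^4*x₁^2*c 0^2*I^2 + (2)*s 1 2^2*l₂^4*x₁^2*c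 0*c 1*I^2 + (-1)*s 1 2^2*l₂^4*x₁^2*c 1^2*I^2) * (hs₁ 2) +
    ((2)*s 1 1^2*l₁^4*x₁^2*c 0*c 1*I^2 + (-2)*s 1 1^2*l₁^3*x₁^2*c 0*c 1*c 2*I^2 + (-6)*s 1 1^2*l₁^3*l₂*x₁^2*c 0*c 1*I^2 + (6)*s 1 1^2*l₁^2*l₂*x₁^2*c 0*c 1*c 2*I^2 + (6)*s 1 1^2*l₁^2*l₂^2*x₁^2*c 0*c 1*I^2 + (-6)*s 1 1^2*l₁*l₂^2*x₁^2*c 0*c 1*c 2*I^2 + (2)*s 0 1*s 0 2*s 1 1*s 1 2*l₁^3*x₁^2*c 0*c 1*I^2 + (-6)*s 0 1*s 0 2*s 1 1*s 1 2*l₁^2*l₂*x₁^2*c 0*c 1*I^2 + (6)*s 0 1*s 0 2*s 1 1*s 1 2*l₁*l₂^2*x₁^2*c 0*c 1*I^2 + (-2)*s 1 1^2*l₁*l₂^3*x₁^2*c 0*c 1*I^2 + (2)*s 1 1^2*l₂^3*x₁^2*c 0*c 1*c 2*I^2 + (-2)*s 0 1*s 0 2*s 1 1*s 1 2*l₂^3*x₁^2*c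 0*c 1*I^2 + (2)*s 0 1*s 0 2*s 1 1*s 1 2*l₁^3*x₁^2*c 0*c 2*I^2 + (-6)*s 0 1*s 0 2*s 1 1*s 1 2*l₁^2*l₂*x₁^2*c 0*c 2*I^2 + (6)*s 0 1*s 0 2*s 1 1*s 1 2*l₁*l₂^2*x₁^2*c 0*c 2*I^2 + (2)*s 1 2^2*l₁^4*x₁^2*c 0*c 2*I^2 + (-2)*s 1 2^2*l₁^3*x₁^2*c 0*c 1*c 2*I^2 + (-6)*s 1 2^2*l₁^3*l₂*x₁^2*c 0*c 2*I^2 + (6)*s 1 2^2*l₁^2*l₂*x₁^2*c 0*c 1*c 2*I^2 + (6)*s 1 2^2*l₁^2*l₂^2*x₁^2*c 0*c 2*I^2 + (-6)*s 1 2^2*l₁*l₂^2*x₁^2*c 0*c 1*c 2*I^2 + (-2)*s 0 1*s 0 2*s 1 1*s 1 2*l₂^3*x₁^2*c 0*c 2*I^2 + (-2)*s 1 2^2*l₁*l₂^3*x₁^2*c 0*c 2*I^2 + (2)*s 1 2^2*l₂^3*x₁^2*c 0*c 1*c 2*I^2 + (-1)*l₁^4*x₁^2*c 1^2*c 2*I^2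 + (2)*l₁^3*l₂*x₁^2*c 1^2*c 2*I^2 + (-2)*l₁*l₂^3*x₁^2*c 1^2*c 2*I^2 + l₂^4*x₁^2*c 1^2*c 2*I^2 + (-2)*s 0 1*s 0 2*s 1 1*s 1 2*l₁^3*x₁^2*c 1*c 2*I^2 + (-1)*l₁^4*x₁^2*c 1*c 2^2*I^2 + (2)*l₁^3*x₁^2*c 1^2*c 2^2*I^2 + (6)*s 0 1*s 0 2*s 1 1*s 1 2*l₁^2*l₂*x₁^2*c 1*c 2*I^2 + (2)*l₁^4*l₂*x₁^2*c 1*c 2*I^2 + (2)*l₁^3*l₂*x₁^2*c 1*c 2^2*I^2 + (-6)*l₁^2*l₂*x₁^2*c 1^2*c 2^2*I^2 + (-6)*s 0 1*s 0 2*s 1 1*s 1 2*l₁*l₂^2*x₁^2*c 1*c 2*I^2 + (-6)*l₁^3*l₂^2*x₁^2*c 1*c 2*I^2 + (6)*l₁*l₂^2*x₁^2*c 1^2*c 2^2*I^2 + (2)*s 0 1*s 0 2*s 1 1*s 1 2*l₂^3*x₁^2*c 1*c 2*I^2 + (6)*l₁^2*l₂^3*x₁^2*c 1*c 2*I^2 +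 (-2)*l₁*l₂^3*x₁^2*c 1*c 2^2*I^2 + (-2)*l₂^3*x₁^2*c 1^2*c 2^2*I^2 + l₂^4*x₁^2*c 1*c 2^2*I^2 + (-1)*l₁^4*x₁^2*c 0*c 1^2*I^2 + (2)*l₁^4*x₁^2*c 0*c 1*c 2*I^2 + (-1)*l₁^4*x₁^2*c 0*c 2^2*I^2 + (4)*l₁^3*l₂*x₁^2*c 0*c 1^2*I^2 + (-8)*l₁^3*l₂*x₁^2*c 0*c 1*c 2*I^2 + (4)*l₁^3*l₂*x₁^2*c 0*c 2^2*I^2 + (-6)*l₁^2*l₂^2*x₁^2*c 0*c 1^2*I^2 + (12)*l₁^2*l₂^2*x₁^2*c 0*c 1*c 2*I^2 + (-6)*l₁^2*l₂^2*x₁^2*c 0*c 2^2*I^2 + (4)*l₁*l₂^3*x₁^2*c 0*c 1^2*I^2 + (-8)*l₁*l₂^3*x₁^2*c 0*c 1*c 2*I^2 + (4)*l₁*l₂^3*x₁^2*c 0*c 2^2*I^2 + (-1)*l₂^4*x₁^2*c 0*c 1^2*I^2 + (-2)*l₁*l₂^4*x₁^2*c 1*c 2*I^2 + (2)*l₂^4*x₁^2*c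 0*c 1*c 2*I^2 + (-1)*l₂^4*x₁^2*c 0*c 2^2*I^2) * (hs₂ 0) +
    ((-1)*l₁^4*x₁^2*c 0^2*c 2*I^2 + (2)*l₁^3*l₂*x₁^2*c 0^2*c 2*I^2 + (-2)*l₁*l₂^3*x₁^2*c 0^2*c 2*I^2 + l₂^4*x₁^2*c 0^2*c 2*I^2 + (2)*s 0 0*s 0 2*s 1 0*s 1 2*l₁^3*x₁^2*c 0*c 1*I^2 + (-6)*s 0 0*s 0 2*s 1 0*s 1 2*l₁^2*l₂*x₁^2*c 0*c 1*I^2 + (-2)*l₁^4*l₂*x₁^2*c 0*c 1*I^2 + l₁^4*x₁^2*c 0^2*c 1*I^2 + (-6)*l₁^3*l₂*x₁^2*c 0*c 1*c 2*I^2 + (-2)*l₁^3*x₁^2*c 0^2*c 1*c 2*I^2 + (6)*l₁^3*l₂^2*x₁^2*c 0*c 1*I^2 + (-2)*l₁^3*l₂*x₁^2*c 0^2*c 1*I^2 + (6)*l₁^2*l₂^2*x₁^2*c 0*c 1*c 2*I^2 + (6)*l₁^2*l₂*x₁^2*c 0^2*c 1*c 2*I^2 + (6)*s 0 0*s 0 2*s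 1 0*s 1 2*l₁*l₂^2*x₁^2*c 0*c 1*I^2 + (-6)*l₁^2*l₂^3*x₁^2*c 0*c 1*I^2 + (-2)*l₁*l₂^3*x₁^2*c 0*c 1*c 2*I^2 + (-6)*l₁*l₂^2*x₁^2*c 0^2*c 1*c 2*I^2 + (-2)*s 0 0*s 0 2*s 1 0*s 1 2*l₂^3*x₁^2*c 0*c 1*I^2 + (2)*l₁*l₂^4*x₁^2*c 0*c 1*I^2 + (2)*l₁*l₂^3*x₁^2*c 0^2*c 1*I^2 + (2)*l₂^3*x₁^2*c 0^2*c 1*c 2*I^2 + (-2)*s 0 0*s 0 2*s 1 0*s 1 2*l₁^3*x₁^2*c 0*c 2*I^2 + (-1)*l₁^4*x₁^2*c 0*c 2^2*I^2 + (2)*l₁^3*x₁^2*c 0^2*c 2^2*I^2 + (6)*s 0 0*s 0 2*s 1 0*s 1 2*l₁^2*l₂*x₁^2*c 0*c 2*I^2 + (2)*l₁^4*l₂*x₁^2*c 0*c 2*I^2 + (2)*l₁^3*l₂*x₁^2*c 0*c 2^2*I^2 + (-6)*l₁^2*l₂*x₁^2*c 0^2*c 2^2*I^2 + (-6)*s 0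 0*s 0 2*s 1 0*s 1 2*l₁*l₂^2*x₁^2*c 0*c 2*I^2 + (-6)*l₁^3*l₂^2*x₁^2*c 0*c 2*I^2 + (6)*l₁*l₂^2*x₁^2*c 0^2*c 2^2*I^2 + (2)*s 0 0*s 0 2*s 1 0*s 1 2*l₂^3*x₁^2*c 0*c 2*I^2 + (6)*l₁^2*l₂^3*x₁^2*c 0*c 2*I^2 + (-2)*l₁*l₂^3*x₁^2*c 0*c 2^2*I^2 + (-2)*l₂^3*x₁^2*c 0^2*c 2^2*I^2 + (2)*s 1 2^2*l₁^4*x₁^2*c 1*c 2*I^2 + (-2)*s 1 2^2*l₁^3*x₁^2*c 0*c 1*c 2*I^2 + (-6)*s 1 2^2*l₁^3*l₂*x₁^2*c 1*c 2*I^2 + (6)*s 1 2^2*l₁^2*l₂*x₁^2*c 0*c 1*c 2*I^2 + (6)*s 1 2^2*l₁^2*l₂^2*x₁^2*c 1*c 2*I^2 + (-6)*s 1 2^2*l₁*l₂^2*x₁^2*c 0*c 1*c 2*I^2 + (2)*s 0 0*s 0 2*s 1 0*s 1 2*l₁^3*x₁^2*c 1*c 2*I^2 + (-6)*s 0 0*s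 0 2*s 1 0*s 1 2*l₁^2*l₂*x₁^2*c 1*c 2*I^2 + (6)*s 0 0*s 0 2*s 1 0*s 1 2*l₁*l₂^2*x₁^2*c 1*c 2*I^2 + (-2)*s 1 2^2*l₁*l₂^3*x₁^2*c 1*c 2*I^2 + (2)*s 1 2^2*l₂^3*x₁^2*c 0*c 1*c 2*I^2 + (-2)*s 0 0*s 0 2*s 1 0*s 1 2*l₂^3*x₁^2*c 1*c 2*I^2 + l₂^4*x₁^2*c 0*c 2^2*I^2 + (-1)*l₁^4*x₁^2*c 1*c 2^2*I^2 + (2)*l₁^4*x₁^2*c 0*c 1*c 2*I^2 + (4)*l₁^3*l₂*x₁^2*c 1*c 2^2*I^2 + (-6)*l₁^2*l₂^2*x₁^2*c 1*c 2^2*I^2 + (4)*l₁*l₂^3*x₁^2*c 1*c 2^2*I^2 + (-1)*l₂^4*x₁^2*c 1*c 2^2*I^2 + (-2)*l₁*l₂^4*x₁^2*c 0*c 2*I^2 + (-1)*l₂^4*x₁^2*c 0^2*c 1*I^2) * (hs₂ 1) +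
    ((-1)*l₁^4*x₁^2*c 0^2*c 1*I^2 + (2)*l₁^3*l₂*x₁^2*c 0^2*c 1*I^2 + (-2)*l₁*l₂^3*x₁^2*c 0^2*c 1*I^2 + l₂^4*x₁^2*c 0^2*c 1*I^2 + (-2)*s 0 0*s 0 1*s 1 0*s 1 1*l₁^3*x₁^2*c 0*c 1*I^2 + (-1)*l₁^4*x₁^2*c 0*c 1^2*I^2 + (2)*l₁^3*x₁^2*c 0^2*c 1^2*I^2 + (6)*s 0 0*s 0 1*s 1 0*s 1 1*l₁^2*l₂*x₁^2*c 0*c 1*I^2 + (2)*l₁^4*l₂*x₁^2*c 0*c 1*I^2 + (2)*l₁^3*l₂*x₁^2*c 0*c 1^2*I^2 + (-6)*l₁^2*l₂*x₁^2*c 0^2*c 1^2*I^2 + (-6)*s 0 0*s 0 1*s 1 0*s 1 1*l₁*l₂^2*x₁^2*c 0*c 1*I^2 + (-6)*l₁^3*l₂^2*x₁^2*c 0*c 1*I^2 + (6)*l₁*l₂^2*x₁^2*c 0^2*c 1^2*I^2 + (2)*s 0 0*s 0 1*s 1 0*s 1 1*l₂^3*x₁^2*c 0*c 1*I^2 + (6)*l₁^2*l₂^3*x₁^2*c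 0*c 1*I^2 + (-2)*l₁*l₂^3*x₁^2*c 0*c 1^2*I^2 + (-2)*l₂^3*x₁^2*c 0^2*c 1^2*I^2 + (-2)*l₁^4*l₂*x₁^2*c 0*c 2*I^2 + l₁^4*x₁^2*c 0^2*c 2*I^2 + (-4)*l₁^3*l₂*x₁^2*c 0*c 1*c 2*I^2 + (-2)*l₁^3*x₁^2*c 0^2*c 1*c 2*I^2 + (6)*l₁^3*l₂^2*x₁^2*c 0*c 2*I^2 + (-2)*l₁^3*l₂*x₁^2*c 0^2*c 2*I^2 + (6)*l₁^2*l₂*x₁^2*c 0^2*c 1*c 2*I^2 + (2)*s 0 0*s 0 1*s 1 0*s 1 1*l₁^3*x₁^2*c 0*c 2*I^2 + (-6)*s 0 0*s 0 1*s 1 0*s 1 1*l₁^2*l₂*x₁^2*c 0*c 2*I^2 + (-6)*l₁^2*l₂^3*x₁^2*c 0*c 2*I^2 + (4)*l₁*l₂^3*x₁^2*c 0*c 1*c 2*I^2 + (-6)*l₁*l₂^2*x₁^2*c 0^2*c 1*c 2*I^2 + (6)*s 0 0*s 0 1*s 1 0*s 1 1*l₁*l₂^2*x₁^2*c 0*c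 2*I^2 + (2)*l₁*l₂^4*x₁^2*c 0*c 2*I^2 + (2)*l₁*l₂^3*x₁^2*c 0^2*c 2*I^2 + (2)*l₂^3*x₁^2*c 0^2*c 1*c 2*I^2 + (-2)*s 0 0*s 0 1*s 1 0*s 1 1*l₂^3*x₁^2*c 0*c 2*I^2 + l₂^4*x₁^2*c 0*c 1^2*I^2 + (2)*s 0 0*s 0 1*s 1 0*s 1 1*l₁^3*x₁^2*c 1*c 2*I^2 + (-6)*s 0 0*s 0 1*s 1 0*s 1 1*l₁^2*l₂*x₁^2*c 1*c 2*I^2 + (-2)*l₁^4*l₂*x₁^2*c 1*c 2*I^2 + l₁^4*x₁^2*c 1^2*c 2*I^2 + (-2)*l₁^3*x₁^2*c 0*c 1^2*c 2*I^2 + (6)*l₁^3*l₂^2*x₁^2*c 1*c 2*I^2 + (-2)*l₁^3*l₂*x₁^2*c 1^2*c 2*I^2 + (6)*l₁^2*l₂*x₁^2*c 0*c 1^2*c 2*I^2 + (6)*s 0 0*s 0 1*s 1 0*s 1 1*l₁*l₂^2*x₁^2*c 1*c 2*I^2 + (-6)*l₁^2*l₂^3*x₁^2*c 1*c 2*I^2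 + (-6)*l₁*l₂^2*x₁^2*c 0*c 1^2*c 2*I^2 + (-2)*s 0 0*s 0 1*s 1 0*s 1 1*l₂^3*x₁^2*c 1*c 2*I^2 + (2)*l₁*l₂^4*x₁^2*c 1*c 2*I^2 + (2)*l₁*l₂^3*x₁^2*c 1^2*c 2*I^2 + (-2)*l₂^4*x₁^2*c 0*c 1*c 2*I^2 + (2)*l₂^3*x₁^2*c 0*c 1^2*c 2*I^2 + (2)*l₁^4*x₁^2*c 0*c 1*c 2*I^2 + (-1)*l₂^4*x₁^2*c 0^2*c 2*I^2 + (-2)*l₁*l₂^4*x₁^2*c 0*c 1*I^2 + (-1)*l₂^4*x₁^2*c 1^2*c 2*I^2) * (hs₂ 2) +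
    (c 0 * ((l₁ - l₂) * x₁ * (I * s 0 2 * s 1 1 - I * s 0 1 * s 1 2)) * (c 0 * ((l₁ - l₂) * x₁ * (I * s 0 2 * s 1 1 - I * s 0 1 * s 1 2)))) * d0 +
    (c 0 * ((l₁ - l₂) * x₁ * (I * s 0 2 * s 1 1 - I * s 0 1 * s 1 2)) * (c 1 * ((l₁ - l₂) * x₁ * (I * s 0 0 * s 1 2 - I * s 0 2 * s 1 0)))) * o01 +
    (c 0 * ((l₁ - l₂) * x₁ * (I * s 0 2 * s 1 1 - I * s 0 1 * s 1 2)) * (c 2 * ((l₁ - l₂) * x₁ * (I * s 0 1 * s 1 0 - I * s 0 0 * s 1 1)))) * o02 +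
    (c 1 * ((l₁ - l₂) * x₁ * (I * s 0 0 * s 1 2 - I * s 0 2 * s 1 0)) * (c 0 * ((l₁ - l₂) * x₁ * (I * s 0 2 * s 1 1 - I * s 0 1 * s 1 2)))) * o10 +
    (c 1 * ((l₁ - l₂) * x₁ * (I * s 0 0 * s 1 2 - I * s 0 2 * s 1 0)) * (c 1 * ((l₁ - l₂) * x₁ * (I * s 0 0 * s 1 2 - I * s 0 2 * s 1 0)))) * d1 +
    (c 1 * ((l₁ - l₂) * x₁ * (I * s 0 0 * s 1 2 - I * s 0 2 * s 1 0)) * (c 2 * ((l₁ - l₂) * x₁ * (I * s 0 1 * s 1 0 - I * s 0 0 * s 1 1)))) * o12 +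
    (c 2 * ((l₁ - l₂) * x₁ * (I * s 0 1 * s 1 0 - I * s 0 0 * s 1 1)) * (c 0 * ((l₁ - l₂) * x₁ * (I * s 0 2 * s 1 1 - I * s 0 1 * s 1 2)))) * o20 +
    (c 2 * ((l₁ - l₂) * x₁ * (I * s 0 1 * s 1 0 - I * s 0 0 * s 1 1)) * (c 1 * ((l₁ - l₂) * x₁ * (I * s 0 0 * s 1 2 - I * s 0 2 * s 1 0)))) * o21 +
    (c 2 * ((l₁ - l₂) * x₁ * (I * s 0 1 * s 1 0 - I * s 0 0 * s 1 1)) * (c 2 * ((l₁ - l₂) * x₁ * (I * s 0 1 * s 1 0 - I * s 0 0 * s 1 1)))) * d2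
end

section
/- If b_1 < b_2 < b_3 are real and z,p ∈ ℝ³ with z×p ≠ 0, then the equation Σ_i (z_jp_k − z_kp_j)²/(λ−b_i) = 0 (cyclic indices), equivalently the quadratic numerator polynomial, has two real roots λ_1 ≤ λ_2 satisfying b_1 ≤ λ_1 ≤ b_2 ≤ λ_2 ≤ b_3. -/
/-- For real `b₁ < b₂ < b₃` and `z, p ∈ ℝ³` with `z × p ≠ 0`, the quadratic
numerator polynomial of `∑ᵢ (z×p)ᵢ²/(λ - bᵢ)` has two real roots `l₁ ≤ l₂`
interlacing the `bᵢ`: `b₁ ≤ l₁ ≤ b₂ ≤ l₂ ≤ b₃`. -/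
theorem separating_roots_interlace (b₁ b₂ b₃ : ℝ) (hb12 : b₁ < b₂) (hb23 : b₂ < b₃)
    (z₁ z₂ z₃ p₁ p₂ p₃ : ℝ)
    (hcross : (z₂ * p₃ - z₃ * p₂, z₃ * p₁ - z₁ * p₃, z₁ * p₂ - z₂ * p₁) ≠ (0, 0, 0))
    (N : ℝ → ℝ)
    (hN : N = fun lam => (z₂ * p₃ - z₃ * p₂) ^ 2 * (lam - b₂) * (lam - b₃)
      + (z₃ * p₁ - z₁ * p₃) ^ 2 * (lam - b₁) * (lam - b₃)
      + (z₁ * p₂ - z₂ * p₁) ^ 2 * (lam - b₁) * (lam - b₂)) :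
    ∃ l₁ l₂ : ℝ, l₁ ≤ l₂ ∧ b₁ ≤ l₁ ∧ l₁ ≤ b₂ ∧ b₂ ≤ l₂ ∧ l₂ ≤ b₃ ∧
      N l₁ = 0 ∧ N l₂ = 0 ∧ ∀ lam, N lam = 0 → lam = l₁ ∨ lam = l₂ := by
  obtain ⟨c₁, hc1⟩ : ∃ c : ℝ, c = (z₂ * p₃ - z₃ * p₂) ^ 2 := ⟨_, rfl⟩
  obtain ⟨c₂, hc2⟩ : ∃ c : ℝ, c = (z₃ * p₁ - z₁ * p₃) ^ 2 := ⟨_, rfl⟩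
  obtain ⟨c₃, hc3⟩ : ∃ c : ℝ, c = (z₁ * p₂ - z₂ * p₁) ^ 2 := ⟨_, rfl⟩
  have hc1n : 0 ≤ c₁ := hc1 ▸ sq_nonneg _
  have hc2n : 0 ≤ c₂ := hc2 ▸ sq_nonneg _
  have hc3n : 0 ≤ c₃ := hc3 ▸ sq_nonneg _
  have ha : 0 < c₁ + c₂ + c₃ := by
    rcases lt_or_eq_of_le (by linarith : (0:ℝ) ≤ c₁ + c₂ + c₃) with h | h
    · exact h
    · exfalso
      apply hcross
      have h1 : c₁ = 0 := by linarith
      have h2 : c₂ = 0 := by linarith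
      have h3 : c₃ = 0 := by linarith
      rw [h1] at hc1; rw [h2] at hc2; rw [h3] at hc3
      have e1 : z₂ * p₃ - z₃ * p₂ = 0 :=
        pow_eq_zero_iff (n := 2) (by norm_num) |>.mp hc1.symm
      have e2 : z₃ * p₁ - z₁ * p₃ = 0 :=
        pow_eq_zero_iff (n := 2) (by norm_num) |>.mp hc2.symm
      have e3 : z₁ * p₂ - z₂ * p₁ = 0 :=
        pow_eq_zero_iff (n := 2) (by norm_num) |>.mp hc3.symm
      simp [e1, e2, e3]
  obtain ⟨a, haD⟩ : ∃ a : ℝ, a = c₁ + c₂ + c₃ := ⟨_, rfl⟩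
  obtain ⟨B, hB⟩ : ∃ B : ℝ, B = -(c₁ * (b₂ + b₃) + c₂ * (b₁ + b₃) + c₃ * (b₁ + b₂)) := ⟨_, rfl⟩
  obtain ⟨C, hC⟩ : ∃ C : ℝ, C = c₁ * b₂ * b₃ + c₂ * b₁ * b₃ + c₃ * b₁ * b₂ := ⟨_, rfl⟩
  have ha0 : 0 < a := haD ▸ ha
  have ha' : a ≠ 0 := ne_of_gt ha0
  have hpoly : ∀ lam, N lam = a * lam ^ 2 + B * lam + C := by
    intro lam
    rw [hN]
    simp only [← hc1, ← hc2, ← hc3]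
    rw [haD, hB, hC]
    ring
  have hNb2 : a * b₂ ^ 2 + B * b₂ + C ≤ 0 := by
    have h : a * b₂ ^ 2 + B * b₂ + C = c₂ * (b₂ - b₁) * (b₂ - b₃) := by
      rw [haD, hB, hC]; ring
    rw [h]
    have h1 : 0 ≤ c₂ * (b₂ - b₁) := mul_nonneg hc2n (by linarith)
    nlinarith
  have hD : 0 ≤ B ^ 2 - 4 * a * C := by nlinarith [sq_nonneg (2 * a * b₂ + B)]
  obtain ⟨s, hs0, hs⟩ : ∃ s : ℝ, 0 ≤ s ∧ s ^ 2 = B ^ 2 - 4 * a * C :=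
    ⟨Real.sqrt _, Real.sqrt_nonneg _, Real.sq_sqrt hD⟩
  obtain ⟨l₁, hl1⟩ : ∃ l : ℝ, 2 * a * l = -B - s := ⟨(-B - s) / (2 * a), by field_simp⟩
  obtain ⟨l₂, hl2⟩ : ∃ l : ℝ, 2 * a * l = -B + s := ⟨(-B + s) / (2 * a), by field_simp⟩
  have hl12 : l₁ ≤ l₂ := by nlinarith
  have hfact : ∀ lam, N lam = a * (lam - l₁) * (lam - l₂) := by
    intro lam
    rw [hpoly]
    have key : (2 * a) * (2 * a) * (a * (lam - l₁) * (lam - l₂))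
        = (2 * a) * (2 * a) * (a * lam ^ 2 + B * lam + C) := by
      linear_combination (-(a * (2 * a * lam - 2 * a * l₂))) * hl1
        + (-(a * (2 * a * lam + B + s))) * hl2 + (-a) * hs
    have h4 : (2 * a) * (2 * a) ≠ 0 := by positivity
    exact (mul_left_cancel₀ h4 key).symm
  clear hN hcross hc1 hc2 hc3
  -- interlacing from sign conditions
  have hb2f : a * (b₂ - l₁) * (b₂ - l₂) ≤ 0 := by
    rw [← hfact b₂, hpoly b₂]; exact hNb2
  have hl1b2 : l₁ ≤ b₂ := by
    by_contra h
    push_neg at h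
    have h1 : b₂ - l₁ < 0 := by linarith
    have h2 : b₂ - l₂ < 0 := by linarith
    have := mul_pos_of_neg_of_neg (mul_neg_of_pos_of_neg ha0 h1) h2
    linarith
  have hb2l2 : b₂ ≤ l₂ := by
    by_contra h
    push_neg at h
    have h1 : 0 < b₂ - l₁ := by linarith
    have h2 : 0 < b₂ - l₂ := by linarith
    have := mul_pos (mul_pos ha0 h1) h2
    linarith
  have hNb1 : 0 ≤ a * (b₁ - l₁) * (b₁ - l₂) := by
    rw [← hfact b₁, hpoly b₁]
    have h : a * b₁ ^ 2 + B * b₁ + C = c₁ * (b₂ - b₁) * (b₃ - b₁) := by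
      rw [haD, hB, hC]; ring
    rw [h]
    exact mul_nonneg (mul_nonneg hc1n (by linarith)) (by linarith)
  have hNb3 : 0 ≤ a * (b₃ - l₁) * (b₃ - l₂) := by
    rw [← hfact b₃, hpoly b₃]
    have h : a * b₃ ^ 2 + B * b₃ + C = c₃ * (b₃ - b₁) * (b₃ - b₂) := by
      rw [haD, hB, hC]; ring
    rw [h]
    exact mul_nonneg (mul_nonneg hc3n (by linarith)) (by linarith)
  have hb1l1 : b₁ ≤ l₁ := by
    by_contra h
    push_neg at h
    have h1 : 0 < b₁ - l₁ := by linarith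
    have h2 : b₁ - l₂ < 0 := by linarith
    have := mul_neg_of_pos_of_neg (mul_pos ha0 h1) h2
    linarith
  have hl2b3 : l₂ ≤ b₃ := by
    by_contra h
    push_neg at h
    have h1 : 0 < b₃ - l₁ := by linarith
    have h2 : b₃ - l₂ < 0 := by linarith
    have := mul_neg_of_pos_of_neg (mul_pos ha0 h1) h2
    linarith
  refine ⟨l₁, l₂, hl12, hb1l1, hl1b2, hb2l2, hl2b3, ?_, ?_, ?_⟩
  · rw [hfact l₁]; ring
  · rw [hfact l₂]; ring
  · intro lam hlam
    rw [hfact lam] at hlam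
    rcases mul_eq_zero.mp hlam with h | h
    · rcases mul_eq_zero.mp h with h' | h'
      · exact absurd h' ha'
      · left; linarith [sub_eq_zero.mp h']
    · right; linarith [sub_eq_zero.mp h]
end
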